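/- For each n ≥ 1, the derivative of q_n satisfies q_n'(x) = -(n+1) · q_{n-1}(x) for all real x. -/

import Mathlib

open Finset Polynomial Real

noncomputable def q (n : ℕ) (x : ℝ) : ℝ :=
  (-1 : ℝ)^n * ∑ k ∈ (Finset.range (n+1)).filter (fun k => Even k),
    ((n+1).choose (k+1) : ℝ) * (-1 : ℝ)^(k/2) * x^(n-k)

theorem q_deriv (n : ℕ) (hn : 1 ≤ n) (x : ℝ) :
    deriv (q n) x = -(n + 1 : ℝ) * q (n - 1) x := by
  obtain ⟨m, rfl⟩ : ∃ m, n = m + 1 := ⟨n - 1, by omega⟩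
  have h : HasDerivAt (q (m+1))
      ((-1 : ℝ)^(m+1) * ∑ k ∈ (Finset.range (m+2)).filter (fun k => Even k),
        ((m+2).choose (k+1) : ℝ) * (-1 : ℝ)^(k/2) * (((m+1-k : ℕ) : ℝ) * x^(m+1-k-1))) x := by
    have := (HasDerivAt.fun_sum (fun k (hk : k ∈ (Finset.range (m+2)).filter (fun k => Even k)) =>
      (hasDerivAt_pow (m+1-k) x).const_mul
        (((m+2).choose (k+1) : ℝ) * (-1 : ℝ)^(k/2)))).const_mul ((-1 : ℝ)^(m+1))
    exact this
  rw [h.deriv]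
  simp only [q, Nat.add_sub_cancel]
  rw [Finset.sum_filter, Finset.sum_filter, Finset.sum_range_succ]
  have hlast : (if Even (m+1) then
      ((m+2).choose (m+1+1) : ℝ) * (-1 : ℝ)^((m+1)/2) * (((m+1-(m+1) : ℕ) : ℝ) * x^(m+1-(m+1)-1))
      else 0) = 0 := by
    split <;> simp
  rw [hlast, add_zero]
  have hsum : ∀ k ∈ Finset.range (m+1),
      (if Even k then ((m+2).choose (k+1) : ℝ) * (-1 : ℝ)^(k/2) * (((m+1-k : ℕ) : ℝ) * x^(m+1-k-1)) else 0)
      = (m+2 : ℝ) * (if Even k then ((m+1).choose (k+1) : ℝ) * (-1 : ℝ)^(k/2) * x^(m-k) else 0) := by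
    intro k hk
    rw [Finset.mem_range] at hk
    split
    · have hexp : m + 1 - k - 1 = m - k := by omega
      have hc : ((m+1).choose (k+1)) * (m+2) = (m+2).choose (k+1) * (m+1-k) := by
        have := Nat.choose_mul_succ_eq (m+1) (k+1)
        simpa using this
      have hc' : ((m+1).choose (k+1) : ℝ) * (m+2) = ((m+2).choose (k+1) : ℝ) * ((m+1-k : ℕ) : ℝ) := by
        exact_mod_cast congrArg (Nat.cast : ℕ → ℝ) hc
      rw [hexp]
      linear_combination (-(-1:ℝ)^(k/2) * x^(m-k)) * hc'
    · ring
  rw [Finset.sum_congr rfl hsum, ← Finset.mul_sum]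
  have hpow : (-1 : ℝ)^(m+1) = -(-1 : ℝ)^m := by ring
  rw [hpow]
  push_cast
  ring
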